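/- Let (F, ι, μ) be a Set-monad satisfying the unit laws, let A₁, A₂ be sets, and let q ∈ F(A₂). Define σ_a : A₂ → A₁ × A₂ by σ_a(b) = (a, b), and τ : A₁ → F(A₁ × A₂) by τ(a) = F(σ_a)(q). If F(1) ≅ 1, then Fπ₁ ∘ τ = ι_{A₁} and Fπ₂ ∘ τ is the constant map on A₁ with value q. -/

import Mathlib

open CategoryTheory

universe u

theorem tau_projections
    (F : Type u ⥤ Type u) (ι : 𝟭 (Type u) ⟶ F) (μ : F ⋙ F ⟶ F)
    (unit1 : ∀ X : Type u, μ.app X ∘ ι.app (F.obj X) = id)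
    (unit2 : ∀ X : Type u, μ.app X ∘ F.map (ι.app X) = id)
    (hconn : Nonempty (F.obj (PUnit : Type u) ≃ PUnit))
    (A₁ A₂ : Type u) (q : F.obj A₂) :
    ((fun a : A₁ => F.map (TypeCat.ofHom (Prod.fst : A₁ × A₂ → A₁))
        (F.map (TypeCat.ofHom (fun b : A₂ => (a, b))) q)) = ι.app A₁) ∧
    ((fun a : A₁ => F.map (TypeCat.ofHom (Prod.snd : A₁ × A₂ → A₂))
        (F.map (TypeCat.ofHom (fun b : A₂ => (a, b))) q)) = fun _ : A₁ => q) := by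
  obtain ⟨e⟩ := hconn
  constructor
  · funext a
    have h1 : F.map (TypeCat.ofHom (Prod.fst : A₁ × A₂ → A₁)) (F.map (TypeCat.ofHom (fun b : A₂ => (a, b))) q)
        = F.map (TypeCat.ofHom (fun _ : A₂ => PUnit.unit) ≫ TypeCat.ofHom (fun _ : PUnit => a)) q := by
      rw [← FunctorToTypes.map_comp_apply]
      rfl
    rw [h1, FunctorToTypes.map_comp_apply]
    have h2 : F.map (TypeCat.ofHom (fun _ : A₂ => PUnit.unit)) q = ι.app PUnit PUnit.unit :=
      e.injective (Subsingleton.elim _ _)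
    rw [h2]
    have h3 := types_congr_hom (ι.naturality (TypeCat.ofHom (fun _ : PUnit => a))) PUnit.unit
    simpa using h3.symm
  · funext a
    rw [← FunctorToTypes.map_comp_apply]
    have : (TypeCat.ofHom (fun b : A₂ => (a, b)) ≫ TypeCat.ofHom (Prod.snd : A₁ × A₂ → A₂)) = 𝟙 A₂ := rfl
    rw [this, FunctorToTypes.map_id_apply]
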